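/- Let ζ₁,…,ζₙ be distinct complex numbers with positive imaginary parts, and set c_{jk} = i/(ζ_k - ζ_j*). Then det[c_{i_b i_a}]_{a,b=1}^n = (i·∏_{l=1}^{n-1}(ζ_{i_n} - ζ_{i_l}) / ∏_{l=1}^{n}(ζ_{i_n} - ζ_{i_l}*)) times the determinant of the n×n matrix whose (a,b) entry is c_{i_b i_a} for a ≤ n-1 and whose last row is all 1's. -/

import Mathlib

open Complex Matrix BigOperators

noncomputable section

theorem stmt5 {n : ℕ} (ζ : Fin (n+1) → ℂ) (hinj : Function.Injective ζ)
    (him : ∀ j, 0 < (ζ j).im) :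
    -- det[c_{i_b i_a}], (a,b) entry c_{i_b i_a} = i/(ζ_{i_a} - ζ_{i_b}*)
    Matrix.det (fun a b : Fin (n+1) => Complex.I / (ζ a - (starRingEnd ℂ) (ζ b)))
      = Complex.I * (∏ l : Fin n, (ζ (Fin.last n) - ζ l.castSucc)) /
          (∏ l : Fin (n+1), (ζ (Fin.last n) - (starRingEnd ℂ) (ζ l))) *
        Matrix.det (fun a b : Fin (n+1) =>
          if a = Fin.last n then 1 else Complex.I / (ζ a - (starRingEnd ℂ) (ζ b))) := by
  set w : Fin (n+1) → ℂ := fun b => (starRingEnd ℂ) (ζ b) with hw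
  set L := Fin.last n with hL
  have hne : ∀ a b, ζ a - w b ≠ 0 := by
    intro a b h
    have h2 := congrArg Complex.im h
    simp [hw, Complex.sub_im, Complex.conj_im] at h2
    nlinarith [him a, him b]
  have hlne : ∀ a : Fin (n+1), a ≠ L → ζ L - ζ a ≠ 0 := by
    intro a ha h
    exact ha (hinj (sub_eq_zero.mp h)).symm
  set N : Matrix (Fin (n+1)) (Fin (n+1)) ℂ :=
    (fun a b => if a = L then 1 else Complex.I / (ζ a - w b)) with hN
  set d : Fin (n+1) → ℂ := fun a => if a = L then Complex.I else ζ L - ζ a with hd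
  set Q : Matrix (Fin (n+1)) (Fin (n+1)) ℂ :=
    (fun a b => (1 / (ζ L - w b)) * (d a * N a b)) with hQ
  have h1 : Matrix.det (fun a b => Complex.I / (ζ a - w b)) = Q.det := by
    apply Matrix.det_eq_of_forall_row_eq_smul_add_const
      (fun i => if i = L then 0 else 1) L (by simp)
    intro i j
    by_cases hi : i = L
    · subst hi
      simp only [hQ, hN, hd, if_pos rfl, ite_true]
      field_simp
      ring
    · simp only [hQ, hN, hd, if_neg hi, ite_false, if_pos rfl, ite_true]
      have h1 := hne i j
      have h2 := hne L j
      field_simp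
      ring
  have h2 : Q.det = (∏ b, (1 / (ζ L - w b))) * ((∏ a, d a) * N.det) := by
    have t1 : Q = Matrix.of (fun a b =>
        (1 / (ζ L - w b)) * ((Matrix.of fun a b => d a * N a b) a b)) := rfl
    rw [t1, Matrix.det_mul_row, Matrix.det_mul_column]
  have h3 : (∏ b, (1 / (ζ L - w b))) = 1 / ∏ b, (ζ L - w b) := by
    rw [Finset.prod_div_distrib, Finset.prod_const_one]
  have h4 : (∏ a, d a) = (∏ l : Fin n, (ζ L - ζ l.castSucc)) * Complex.I := by
    rw [Fin.prod_univ_castSucc (f := d)]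
    congr 1
    · exact Finset.prod_congr rfl fun i _ => by simp [hd, hL, (Fin.castSucc_lt_last i).ne]
    · simp [hd, hL]
  rw [h1, h2, h3, h4]
  ring

end
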